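/- Let M_∧(b,t) = max{b^{1/2} t n^{3/2}, (b²/ℓ²)·1{b < nℓ}, (bn/ℓ)·1{b ≥ nℓ}} and let κ(b,t) be defined by κ(b,t) = tn² for 1 ≤ b < t^{1/2}nℓ, κ(b,t) = b²/ℓ² for t^{1/2}nℓ ≤ b < nℓ, and κ(b,t) = bn/ℓ for nℓ ≤ b ≤ tn²ℓ, where ℓ = log(1/t). Then for all 1 ≤ b ≤ tn²ℓ we have M_∧(b,t)² ≥ b·t·n·κ(b,t). -/

import Mathlib

lemma key_sqrt_log (t : ℝ) (ht0 : 0 < t) (ht : t ≤ 1 / 2) :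
    t ^ ((1 : ℝ) / 2) * Real.log (1 / t) ≤ 1 := by
  set x := t ^ ((1 : ℝ) / 4) with hx
  have hxpos : 0 < x := Real.rpow_pos_of_pos ht0 _
  have hx2 : x ^ 2 = t ^ ((1 : ℝ) / 2) := by
    rw [hx, ← Real.rpow_natCast (t ^ ((1 : ℝ) / 4)) 2, ← Real.rpow_mul ht0.le]
    norm_num
  have hlogx : Real.log x = (1 / 4) * Real.log t := Real.log_rpow ht0 _
  have hlb : Real.log (1 / x) ≤ 1 / x - 1 := Real.log_le_sub_one_of_pos (by positivity)
  have h1 : Real.log (1 / t) = -Real.log t := by rw [one_div, Real.log_inv]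
  have h2 : Real.log (1 / x) = -Real.log x := by rw [one_div, Real.log_inv]
  rw [h1, ← hx2]
  -- goal: x^2 * (-log t) ≤ 1 ; log t = 4 log x ; -log x ≤ 1/x - 1
  have h3 : -Real.log t ≤ 4 * (1 / x - 1) := by
    rw [h2] at hlb; nlinarith [hlb]
  have h4 : x ^ 2 * (-Real.log t) ≤ x ^ 2 * (4 * (1 / x - 1)) := by
    apply mul_le_mul_of_nonneg_left h3 (by positivity)
  have h5 : x ^ 2 * (4 * (1 / x - 1)) = 4 * x - 4 * x ^ 2 := by
    field_simp
  nlinarith [sq_nonneg (2 * x - 1)]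

set_option maxHeartbeats 1000000 in
theorem stmt_17 (n : ℕ) (hn : 2 ≤ n) (t b : ℝ) (ht0 : 0 < t) (ht : t ≤ 1 / 2)
    (hb1 : 1 ≤ b) (hb2 : b ≤ t * (n : ℝ) ^ 2 * Real.log (1 / t)) :
    ∀ ℓ : ℝ, ℓ = Real.log (1 / t) →
    ∀ M κ : ℝ,
      M = max (max (b ^ ((1 : ℝ) / 2) * t * (n : ℝ) ^ ((3 : ℝ) / 2))
          (if b < (n : ℝ) * ℓ then b ^ 2 / ℓ ^ 2 else 0))
          (if (n : ℝ) * ℓ ≤ b then b * n / ℓ else 0) →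
      κ = (if b < t ^ ((1 : ℝ) / 2) * (n : ℝ) * ℓ then t * (n : ℝ) ^ 2
           else if b < (n : ℝ) * ℓ then b ^ 2 / ℓ ^ 2 else b * n / ℓ) →
    b * t * (n : ℝ) * κ ≤ M ^ 2 := by
  intro ℓ hℓ M κ hM hκ
  have hn2 : (2 : ℝ) ≤ (n : ℝ) := by exact_mod_cast hn
  have hnpos : (0 : ℝ) < n := by linarith
  have hℓpos : 0 < ℓ := by
    rw [hℓ]; apply Real.log_pos; rw [lt_div_iff₀ ht0]; linarith
  have hs : 0 < t ^ ((1 : ℝ) / 2) := Real.rpow_pos_of_pos ht0 _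
  have hssq : (t ^ ((1 : ℝ) / 2)) ^ 2 = t := by
    rw [← Real.rpow_natCast (t ^ ((1 : ℝ) / 2)) 2, ← Real.rpow_mul ht0.le]
    norm_num
  have hkey : t ^ ((1 : ℝ) / 2) * ℓ ≤ 1 := by rw [hℓ]; exact key_sqrt_log t ht0 ht
  by_cases h1 : b < t ^ ((1 : ℝ) / 2) * (n : ℝ) * ℓ
  · -- κ = t n², use first term of max
    rw [hκ, if_pos h1]
    have hA : b ^ ((1 : ℝ) / 2) * t * (n : ℝ) ^ ((3 : ℝ) / 2) ≤ M := by
      rw [hM]; exact le_trans (le_max_left _ _) (le_max_left _ _)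
    have hA0 : (0 : ℝ) ≤ b ^ ((1 : ℝ) / 2) * t * (n : ℝ) ^ ((3 : ℝ) / 2) := by positivity
    have hAsq : (b ^ ((1 : ℝ) / 2) * t * (n : ℝ) ^ ((3 : ℝ) / 2)) ^ 2
        = b * t ^ 2 * (n : ℝ) ^ 3 := by
      have e1 : (b ^ ((1 : ℝ) / 2)) ^ 2 = b := by
        rw [← Real.rpow_natCast (b ^ ((1 : ℝ) / 2)) 2, ← Real.rpow_mul (by linarith)]
        norm_num
      have e2 : ((n : ℝ) ^ ((3 : ℝ) / 2)) ^ 2 = (n : ℝ) ^ 3 := by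
        rw [← Real.rpow_natCast ((n : ℝ) ^ ((3 : ℝ) / 2)) 2, ← Real.rpow_mul hnpos.le]
        norm_num
      calc (b ^ ((1 : ℝ) / 2) * t * (n : ℝ) ^ ((3 : ℝ) / 2)) ^ 2
          = (b ^ ((1 : ℝ) / 2)) ^ 2 * t ^ 2 * ((n : ℝ) ^ ((3 : ℝ) / 2)) ^ 2 := by ring
        _ = b * t ^ 2 * (n : ℝ) ^ 3 := by rw [e1, e2]
    have : (b ^ ((1 : ℝ) / 2) * t * (n : ℝ) ^ ((3 : ℝ) / 2)) ^ 2 ≤ M ^ 2 :=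
      pow_le_pow_left₀ hA0 hA 2
    rw [hAsq] at this
    nlinarith
  · push_neg at h1
    -- b ≥ t^{1/2} n ℓ ; also t ℓ² ≤ t^{1/2} ℓ ≤ 1
    have htl2 : t * ℓ ^ 2 ≤ t ^ ((1 : ℝ) / 2) * ℓ := by
      have : (t ^ ((1 : ℝ) / 2) * ℓ) ^ 2 ≤ t ^ ((1 : ℝ) / 2) * ℓ := by
        nlinarith [mul_pos hs hℓpos]
      nlinarith [hssq]
    by_cases h2 : b < (n : ℝ) * ℓ
    · -- κ = b²/ℓ²
      rw [hκ, if_neg (not_lt.mpr h1), if_pos h2]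
      have hA : b ^ 2 / ℓ ^ 2 ≤ M := by
        rw [hM]
        refine le_trans ?_ (le_max_left _ _)
        rw [if_pos h2]
        exact le_max_right _ _
      have hA0 : (0 : ℝ) ≤ b ^ 2 / ℓ ^ 2 := by positivity
      have hMsq : (b ^ 2 / ℓ ^ 2) ^ 2 ≤ M ^ 2 := pow_le_pow_left₀ hA0 hA 2
      have hb' : t * (n : ℝ) * ℓ ^ 2 ≤ b := by
        calc t * (n : ℝ) * ℓ ^ 2 = (t * ℓ ^ 2) * n := by ring
          _ ≤ (t ^ ((1 : ℝ) / 2) * ℓ) * n := mul_le_mul_of_nonneg_right htl2 hnpos.le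
          _ = t ^ ((1 : ℝ) / 2) * (n : ℝ) * ℓ := by ring
          _ ≤ b := h1
      refine le_trans ?_ hMsq
      rw [div_pow, show b * t * (n : ℝ) * (b ^ 2 / ℓ ^ 2) = b ^ 3 * t * n / ℓ ^ 2 from by ring,
        div_le_div_iff₀ (by positivity) (by positivity)]
      have hb0 : (0 : ℝ) < b := by linarith
      nlinarith [mul_le_mul_of_nonneg_left hb' (by positivity : (0:ℝ) ≤ b ^ 3 * ℓ ^ 2)]
    · -- κ = b n / ℓ
      push_neg at h2
      rw [hκ, if_neg (not_lt.mpr h1), if_neg (not_lt.mpr h2)]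
      have hA : b * n / ℓ ≤ M := by
        rw [hM]
        refine le_trans ?_ (le_max_right _ _)
        rw [if_pos h2]
      have hA0 : (0 : ℝ) ≤ b * n / ℓ := by positivity
      have hMsq : (b * n / ℓ) ^ 2 ≤ M ^ 2 := pow_le_pow_left₀ hA0 hA 2
      refine le_trans ?_ hMsq
      have hts : t ≤ t ^ ((1 : ℝ) / 2) := by
        calc t = t ^ (1 : ℝ) := (Real.rpow_one t).symm
          _ ≤ t ^ ((1 : ℝ) / 2) :=
            Real.rpow_le_rpow_of_exponent_ge ht0 (by linarith) (by norm_num)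
      have htℓ : t * ℓ ≤ 1 :=
        le_trans (mul_le_mul_of_nonneg_right hts hℓpos.le) hkey
      have h6 : b * t * (n : ℝ) ≤ b * (n : ℝ) / ℓ := by
        rw [le_div_iff₀ hℓpos]
        have := mul_le_mul_of_nonneg_left htℓ (show (0 : ℝ) ≤ b * n by positivity)
        nlinarith [this]
      calc b * t * (n : ℝ) * (b * (n : ℝ) / ℓ)
          ≤ (b * (n : ℝ) / ℓ) * (b * (n : ℝ) / ℓ) :=
            mul_le_mul_of_nonneg_right h6 hA0
        _ = (b * (n : ℝ) / ℓ) ^ 2 := (sq (b * (n : ℝ) / ℓ)).symm
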